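/- arXiv:1902.07714 — 3 statements merged into one kernel-verified Lean document; each statement's English description precedes it below -/
import Mathlib

section
/- Let T be a Hermitian operator on a d-dimensional space with d even, and let X = P₊ − P₋ where P₊ projects onto an orthonormal eigenbasis subset corresponding to the ⌊d/2⌋ largest eigenvalues of T and P₋ onto the ⌊d/2⌋ smallest. Then tr(X) = 0, ‖X‖_∞ ≤ 1, and tr(X·T) = ‖T − μ(T)·I‖₁ where μ(T) is a median eigenvalue of T. -/
open scoped ComplexOrder

/-- The trace norm (Schatten 1-norm) of a complex matrix: `‖A‖₁ = tr √(AᴴA)`. -/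
noncomputable def traceNorm {n : Type*} [Fintype n] [DecidableEq n] (A : Matrix n n ℂ) : ℝ :=
  ((((Matrix.posSemidef_conjTranspose_mul_self A).1.eigenvectorUnitary : Matrix n n ℂ) *
      Matrix.diagonal (((↑) : ℝ → ℂ) ∘ (Real.sqrt ∘ (Matrix.posSemidef_conjTranspose_mul_self A).1.eigenvalues)) *
      (star (Matrix.posSemidef_conjTranspose_mul_self A).1.eigenvectorUnitary : Matrix n n ℂ)).trace).re

/-- The operator (spectral) norm of a complex matrix. -/
noncomputable def opNorm {n : Type*} [Fintype n] [DecidableEq n] (A : Matrix n n ℂ) : ℝ :=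
  ‖LinearMap.toContinuousLinearMap (Matrix.toEuclideanLin A)‖

open scoped Matrix.Norms.L2Operator
open Matrix

/-- Let `T` be Hermitian on a `d`-dimensional space with `d` even,
diagonalized by an orthonormal eigenbasis `v` with nonincreasing eigenvalues `e`.
Let `X = P₊ − P₋`, where `P₊` (resp. `P₋`) is the spectral projection onto the span of
the eigenvectors of the `⌊d/2⌋` largest (resp. smallest) eigenvalues.  Then
`tr X = 0`, `‖X‖_∞ ≤ 1`, and `tr(X·T) = ‖T − μ(T)·I‖₁` for any median eigenvalue `μ(T)`. -/
theorem spectral_split_achieves_traceNorm (d : ℕ) (hd : 0 < d) (hdeven : Even d)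
    (T : Matrix (Fin d) (Fin d) ℂ) (hT : T.IsHermitian)
    (e : Fin d → ℝ) (he : Antitone e)
    (v : Fin d → Fin d → ℂ)
    (hortho : ∀ i j : Fin d, dotProduct (star (v i)) (v j) = if i = j then 1 else 0)
    (heig : ∀ i : Fin d, T.mulVec (v i) = (e i : ℂ) • v i)
    (μ : ℝ)
    (hμle : (d + 1) / 2 ≤ (Finset.univ.filter (fun i : Fin d => e i ≤ μ)).card)
    (hμge : (d + 1) / 2 ≤ (Finset.univ.filter (fun i : Fin d => μ ≤ e i)).card)
    (X : Matrix (Fin d) (Fin d) ℂ)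
    (hX : X =
      (∑ i ∈ Finset.univ.filter (fun i : Fin d => (i : ℕ) < d / 2),
        Matrix.vecMulVec (v i) (star (v i)))
      - (∑ i ∈ Finset.univ.filter (fun i : Fin d => d / 2 ≤ (i : ℕ)),
        Matrix.vecMulVec (v i) (star (v i)))) :
    X.trace = 0 ∧ opNorm X ≤ 1 ∧
      ((X * T).trace).re = traceNorm (T - (μ : ℂ) • (1 : Matrix (Fin d) (Fin d) ℂ)) := by
  classical

  obtain ⟨m, rfl⟩ : ∃ m, d = m + m := hdeven
  have hm : 0 < m := by omega
  simp only [show (m + m) / 2 = m by omega] at hX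
  simp only [show (m + m + 1) / 2 = m by omega] at hμle hμge
  -- the unitary of eigenvectors
  set U : Matrix (Fin (m + m)) (Fin (m + m)) ℂ := Matrix.of fun j i => v i j with hUdef
  have hUU : Uᴴ * U = 1 := by
    ext i j
    simpa [Matrix.mul_apply, Matrix.conjTranspose_apply, dotProduct, Matrix.one_apply,
      U] using hortho i j
  have hUU' : U * Uᴴ = 1 := mul_eq_one_comm.mp hUU
  have hconj : ∀ M N : Matrix (Fin (m + m)) (Fin (m + m)) ℂ,
      (U * M * Uᴴ) * (U * N * Uᴴ) = U * (M * N) * Uᴴ := by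
    have haux : ∀ A B : Matrix (Fin (m + m)) (Fin (m + m)) ℂ, (A * Uᴴ) * (U * B) = A * B := by
      intro A B
      rw [Matrix.mul_assoc, ← Matrix.mul_assoc Uᴴ U B, hUU, Matrix.one_mul]
    intro M N
    rw [Matrix.mul_assoc U N Uᴴ, haux (U * M) (N * Uᴴ), Matrix.mul_assoc U M (N * Uᴴ),
      ← Matrix.mul_assoc M N Uᴴ, ← Matrix.mul_assoc U (M * N) Uᴴ]
  have htrace : ∀ M : Matrix (Fin (m + m)) (Fin (m + m)) ℂ,
      (U * M * Uᴴ).trace = M.trace := by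
    intro M
    rw [Matrix.trace_mul_comm, ← Matrix.mul_assoc, hUU, Matrix.one_mul]
  have hstar : ∀ f : Fin (m + m) → ℝ,
      (U * Matrix.diagonal (fun i => (f i : ℂ)) * Uᴴ)ᴴ
        = U * Matrix.diagonal (fun i => (f i : ℂ)) * Uᴴ := by
    intro f
    have hf : star (fun i => ((f i : ℂ))) = fun i => ((f i : ℂ)) := by
      funext i
      simp [Complex.star_def, Complex.conj_ofReal]
    rw [Matrix.conjTranspose_mul, Matrix.conjTranspose_mul, Matrix.conjTranspose_conjTranspose,
      Matrix.diagonal_conjTranspose, hf, Matrix.mul_assoc]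
  -- the sign function
  set ε : Fin (m + m) → ℝ := fun i => if (i : ℕ) < m then 1 else -1 with hεdef
  set S : Matrix (Fin (m + m)) (Fin (m + m)) ℂ := Matrix.diagonal fun i => (ε i : ℂ) with hSdef
  have hX2 : X = ∑ i, ((ε i : ℂ)) • Matrix.vecMulVec (v i) (star (v i)) := by
    rw [hX, Finset.sum_filter, Finset.sum_filter, ← Finset.sum_sub_distrib]
    refine Finset.sum_congr rfl fun i _ => ?_
    by_cases h : (i : ℕ) < m
    · simp [ε, h, not_le.mpr h]
    · simp [ε, h, not_lt.mp h]
  have hXU : X = U * S * Uᴴ := by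
    rw [hX2]
    ext j k
    rw [Matrix.mul_apply]
    simp only [hSdef, hUdef, Matrix.mul_diagonal, Matrix.conjTranspose_apply,
      Matrix.sum_apply, Matrix.smul_apply, Matrix.vecMulVec_apply, smul_eq_mul,
      Matrix.of_apply, Pi.star_apply]
    exact Finset.sum_congr rfl fun i _ => by ring
  -- spectral decomposition
  set D : Matrix (Fin (m + m)) (Fin (m + m)) ℂ := Matrix.diagonal fun i => (e i : ℂ) with hDdef
  have hTU : T * U = U * D := by
    ext j i
    have h := congrFun (heig i) j
    simp only [Matrix.mulVec, dotProduct, Pi.smul_apply, smul_eq_mul] at h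
    rw [Matrix.mul_apply, Matrix.mul_diagonal]
    simpa [U, mul_comm] using h
  have hT2 : T = U * D * Uᴴ := by
    rw [← hTU, Matrix.mul_assoc, hUU', Matrix.mul_one]
  -- cardinalities
  have cardlt : ∀ k : ℕ, k < m + m →
      (Finset.univ.filter fun i : Fin (m + m) => (i : ℕ) < k).card = k := by
    intro k hk
    have : (Finset.univ.filter fun i : Fin (m + m) => (i : ℕ) < k)
        = Finset.Iio (⟨k, hk⟩ : Fin (m + m)) := by
      ext j
      simp [Fin.lt_def]
    rw [this, Fin.card_Iio]
  have hc1 : (Finset.univ.filter fun i : Fin (m + m) => (i : ℕ) < m).card = m :=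
    cardlt m (by omega)
  have hc2 : (Finset.univ.filter fun i : Fin (m + m) => ¬(i : ℕ) < m).card = m := by
    have h := Finset.card_filter_add_card_filter_not
      (s := (Finset.univ : Finset (Fin (m + m)))) (p := fun i : Fin (m + m) => (i : ℕ) < m)
    simp only [Finset.card_univ, Fintype.card_fin, hc1] at h
    omega
  have hεsum : ∑ i, ε i = 0 := by
    simp only [hεdef]
    rw [Finset.sum_ite, Finset.sum_const, Finset.sum_const, hc1, hc2]
    simp
  -- median bounds
  have claim1 : ∀ i : Fin (m + m), (i : ℕ) < m → μ ≤ e i := by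
    intro i hi
    by_contra hlt
    push_neg at hlt
    have hsub : (Finset.univ.filter fun j : Fin (m + m) => μ ≤ e j) ⊆ Finset.Iio i := by
      intro j hj
      simp only [Finset.mem_filter, Finset.mem_univ, true_and] at hj
      rw [Finset.mem_Iio]
      by_contra hji
      push_neg at hji
      exact absurd hj (not_le.mpr (lt_of_le_of_lt (he hji) hlt))
    have hcard := Finset.card_le_card hsub
    rw [Fin.card_Iio] at hcard
    omega
  have claim2 : ∀ i : Fin (m + m), m ≤ (i : ℕ) → e i ≤ μ := by
    intro i hi
    by_contra hlt
    push_neg at hlt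
    have hsub : (Finset.univ.filter fun j : Fin (m + m) => e j ≤ μ) ⊆ Finset.Ioi i := by
      intro j hj
      simp only [Finset.mem_filter, Finset.mem_univ, true_and] at hj
      rw [Finset.mem_Ioi]
      by_contra hji
      push_neg at hji
      exact absurd hj (not_le.mpr (lt_of_lt_of_le hlt (he hji)))
    have hcard := Finset.card_le_card hsub
    rw [Fin.card_Ioi] at hcard
    omega
  refine ⟨?_, ?_, ?_⟩
  · -- trace X = 0
    rw [hXU, htrace, hSdef, Matrix.trace_diagonal, ← Complex.ofReal_sum, hεsum,
      Complex.ofReal_zero]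
  · -- opNorm X ≤ 1
    have hε2 : ∀ i : Fin (m + m), (ε i : ℂ) * (ε i : ℂ) = 1 := by
      intro i
      by_cases h : (i : ℕ) < m <;> simp [hεdef, h]
    have hSS : S * S = 1 := by
      rw [hSdef, Matrix.diagonal_mul_diagonal]
      simp only [hε2]
      exact Matrix.diagonal_one
    have hXH : Xᴴ = X := by
      rw [hXU, hstar]
    have hX1 : X * X = 1 := by
      rw [hXU, hconj, hSS, Matrix.mul_one, hUU']
    have hXunit : X ∈ unitary (Matrix (Fin (m + m)) (Fin (m + m)) ℂ) :=
      ⟨by rw [Matrix.star_eq_conjTranspose, hXH, hX1],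
       by rw [Matrix.star_eq_conjTranspose, hXH, hX1]⟩
    haveI : Nonempty (Fin (m + m)) := ⟨⟨0, by omega⟩⟩
    have hnorm : opNorm X = ‖X‖ := rfl
    rw [hnorm, CStarRing.norm_of_mem_unitary hXunit]
  · -- the trace identity
    have hXT : (X * T).trace = ∑ i, ((ε i : ℂ) * (e i : ℂ)) := by
      rw [hXU, hT2, hconj, htrace, hSdef, hDdef, Matrix.diagonal_mul_diagonal,
        Matrix.trace_diagonal]
    set A : Matrix (Fin (m + m)) (Fin (m + m)) ℂ := T - (μ : ℂ) • 1 with hAdef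
    have hA : A = U * Matrix.diagonal (fun i => ((e i - μ : ℝ) : ℂ)) * Uᴴ := by
      have h1 : (μ : ℂ) • (1 : Matrix (Fin (m + m)) (Fin (m + m)) ℂ)
          = U * Matrix.diagonal (fun _ => (μ : ℂ)) * Uᴴ := by
        rw [← Matrix.smul_one_eq_diagonal, Matrix.mul_smul, Matrix.mul_one, Matrix.smul_mul,
          hUU']
      rw [hAdef, hT2, h1, ← Matrix.sub_mul, ← Matrix.mul_sub, hDdef, Matrix.diagonal_sub]
      congr 2
      funext i
      push_cast
      ring
    set B : Matrix (Fin (m + m)) (Fin (m + m)) ℂ :=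
      U * Matrix.diagonal (fun i => ((|e i - μ| : ℝ) : ℂ)) * Uᴴ with hBdef
    have hBpsd : B.PosSemidef :=
      Matrix.PosSemidef.mul_mul_conjTranspose_same
        (Matrix.posSemidef_diagonal_iff.mpr fun i => Complex.zero_le_real.mpr (abs_nonneg _)) U
    have hB2 : B ^ 2 = Aᴴ * A := by
      rw [pow_two, hBdef, hconj, hA, hstar, hconj, Matrix.diagonal_mul_diagonal,
        Matrix.diagonal_mul_diagonal]
      simp only [← Complex.ofReal_mul, abs_mul_abs_self]
    have hsqrt : (Matrix.posSemidef_conjTranspose_mul_self A).1.cfc Real.sqrt = B := by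
      open scoped MatrixOrder in
      rw [← (Matrix.posSemidef_conjTranspose_mul_self A).1.cfc_eq]
      have hsq : cfc Real.sqrt (Aᴴ * A) = CFC.sqrt (Aᴴ * A) := by
        rw [CFC.sqrt_eq_cfc, cfc_nnreal_eq_real _ _ (Matrix.posSemidef_conjTranspose_mul_self A).nonneg]
        congr 1
        funext x
        rw [Real.coe_sqrt, Real.coe_toNNReal']
        rcases le_total 0 x with h | h
        · rw [max_eq_left h]
        · rw [max_eq_right h, Real.sqrt_zero, Real.sqrt_eq_zero_of_nonpos h]
      rw [hsq, ← hB2]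
      exact CFC.sqrt_sq B hBpsd.nonneg
    have htn : traceNorm A = ∑ i, |e i - μ| := by
      rw [show traceNorm A = (((posSemidef_conjTranspose_mul_self A).1.cfc Real.sqrt).trace).re
        from rfl, hsqrt, hBdef, htrace, Matrix.trace_diagonal, ← Complex.ofReal_sum,
        Complex.ofReal_re]
    have hre : ((X * T).trace).re = ∑ i, ε i * e i := by
      rw [hXT]
      rw [show (∑ i, ((ε i : ℂ) * (e i : ℂ))) = ((∑ i, ε i * e i : ℝ) : ℂ) by push_cast; rfl]
      exact Complex.ofReal_re _
    rw [hre, htn]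
    have key : ∀ i : Fin (m + m), ε i * (e i - μ) = |e i - μ| := by
      intro i
      by_cases h : (i : ℕ) < m
      · have hle := claim1 i h
        rw [abs_of_nonneg (by linarith)]
        simp [ε, h]
      · have hle := claim2 i (not_lt.mp h)
        rw [abs_of_nonpos (by linarith)]
        simp [ε, h]
    calc ∑ i, ε i * e i
        = ∑ i, (ε i * (e i - μ) + ε i * μ) := Finset.sum_congr rfl fun i _ => by ring
      _ = (∑ i, ε i * (e i - μ)) + (∑ i, ε i) * μ := by
          rw [Finset.sum_add_distrib, Finset.sum_mul]
      _ = ∑ i, |e i - μ| := by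
          rw [hεsum, zero_mul, add_zero]
          exact Finset.sum_congr rfl fun i _ => key i
end

section
/- Fix a positive integer d ≥ 2 and a positive integer l. Among all partitions λ = (λ₁ ≥ λ₂ ≥ ⋯ ≥ λ_d = 0) of nonnegative integers with λ₁ = l, the Weyl dimension D_λ = ∏_{1 ≤ i < j ≤ d} (λ_i − λ_j + j − i)/(j − i) is minimized by the symmetric partition λ = (l, 0, …, 0), whose dimension equals the binomial coefficient C(d−1+l, d−1). That is, C(d−1+l, d−1) ≤ D_λ for every such λ. -/
open Finset in
private lemma wd_choose_cast_eq_prod (x n : ℕ) :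
    (((x + n).choose n : ℕ) : ℝ) = ∏ m ∈ range n, ((x : ℝ) + m + 1) / (m + 1) := by
  induction n with
  | zero => simp
  | succ n ih =>
    rw [prod_range_succ, ← ih]
    have h := Nat.add_one_mul_choose_eq (x + n) n
    have h2 : ((x + n + 1) * (x + n).choose n : ℕ) = ((x + (n+1)).choose (n+1) * (n+1) : ℕ) := by
      simpa [Nat.succ_eq_add_one, Nat.add_assoc] using h
    have h3 : ((x:ℝ) + n + 1) * ((x + n).choose n : ℕ) = ((x + (n+1)).choose (n+1) : ℕ) * ((n:ℝ)+1) := by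
      exact_mod_cast congrArg (fun t : ℕ => (t : ℝ)) h2
    have hn : ((n:ℝ) + 1) ≠ 0 := by positivity
    field_simp
    linarith [h3]

open Finset in
private lemma wd_choose_mul_le (A C n : ℕ) :
    (((A + C + n).choose n : ℕ) : ℝ) ≤ ((A+n).choose n : ℝ) * ((C+n).choose n : ℝ) := by
  rw [wd_choose_cast_eq_prod, wd_choose_cast_eq_prod, wd_choose_cast_eq_prod,
    ← Finset.prod_mul_distrib]
  apply Finset.prod_le_prod
  · intro m _; positivity
  · intro m _
    rw [div_mul_div_comm, div_le_div_iff₀ (by positivity) (by positivity)]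
    push_cast
    nlinarith [mul_nonneg (mul_nonneg (Nat.cast_nonneg (α := ℝ) A) (Nat.cast_nonneg (α := ℝ) C))
      (by positivity : (0:ℝ) ≤ (m:ℝ) + 1)]

open Finset in
private lemma wd_key (ν : ℕ → ℕ) (hν : Antitone ν) (n : ℕ) :
    (((ν 0 - ν n + n).choose n : ℕ) : ℝ) ≤
      ∏ j ∈ range (n+1), ∏ i ∈ range j,
        (((ν i : ℝ) - ν j + (j:ℝ) - i) / ((j:ℝ) - i)) := by
  induction n with
  | zero => simp
  | succ n ih =>
    set A := ν 0 - ν n with hA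
    set Cc := ν n - ν (n+1) with hC
    have hA' : (A:ℝ) = (ν 0 : ℝ) - ν n := by
      rw [hA]; exact_mod_cast Nat.cast_sub (hν (Nat.zero_le n))
    have hC' : (Cc:ℝ) = (ν n : ℝ) - ν (n+1) := by
      rw [hC]; exact_mod_cast Nat.cast_sub (hν (Nat.le_succ n))
    rw [prod_range_succ]
    have hcol : ((Cc + n).choose n : ℝ) * (((A:ℝ) + Cc + n + 1) / ((n:ℝ)+1)) ≤
        ∏ i ∈ range (n+1), (((ν i : ℝ) - ν (n+1) + ((n+1:ℕ):ℝ) - i) / (((n+1:ℕ):ℝ) - i)) := by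
      rw [prod_range_succ' (fun i => (((ν i : ℝ) - ν (n+1) + ((n+1:ℕ):ℝ) - i) / (((n+1:ℕ):ℝ) - i))) n]
      have h1 : ((Cc + n).choose n : ℝ) ≤
          ∏ i ∈ range n, (((ν (i+1) : ℝ) - ν (n+1) + ((n+1:ℕ):ℝ) - (i+1:ℕ)) / (((n+1:ℕ):ℝ) - (i+1:ℕ))) := by
        rw [wd_choose_cast_eq_prod]
        rw [← prod_range_reflect (fun m => ((Cc : ℝ) + m + 1) / (m + 1)) n]
        apply Finset.prod_le_prod
        · intro m _; positivity
        · intro m hm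
          simp only [mem_range] at hm
          have hmn : ((n - 1 - m : ℕ) : ℝ) = (n:ℝ) - 1 - m := by
            rw [Nat.cast_sub (by omega), Nat.cast_sub (by omega)]
            push_cast; ring
          have hden : (0:ℝ) < ((n:ℝ)+1) - (m+1) := by
            have : (m:ℝ) < n := by exact_mod_cast hm
            linarith
          have hmono : (ν n : ℝ) ≤ ν (m+1) := by exact_mod_cast hν (by omega : m + 1 ≤ n)
          rw [hmn, div_le_div_iff₀ (by linarith) (by push_cast; linarith)]
          push_cast
          rw [hC'] at *
          nlinarith [hν (Nat.le_succ n)]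
      have h2 : ((A:ℝ) + Cc + n + 1) / ((n:ℝ)+1) =
          (((ν 0 : ℝ) - ν (n+1) + ((n+1:ℕ):ℝ) - ((0:ℕ):ℝ)) / (((n+1:ℕ):ℝ) - ((0:ℕ):ℝ))) := by
        rw [hA', hC']; push_cast; ring_nf
      rw [← h2]
      exact mul_le_mul h1 le_rfl (by positivity) (le_trans (Nat.cast_nonneg _) h1)
    have hR : (0:ℝ) ≤ ∏ j ∈ range (n+1), ∏ i ∈ range j,
        (((ν i : ℝ) - ν j + (j:ℝ) - i) / ((j:ℝ) - i)) := le_trans (Nat.cast_nonneg _) ih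
    have step1 : ((A+n).choose n : ℝ) * (((Cc + n).choose n : ℝ) * (((A:ℝ) + Cc + n + 1) / ((n:ℝ)+1))) ≤
        (∏ j ∈ range (n+1), ∏ i ∈ range j, (((ν i : ℝ) - ν j + (j:ℝ) - i) / ((j:ℝ) - i))) *
        ∏ i ∈ range (n+1), (((ν i : ℝ) - ν (n+1) + ((n+1:ℕ):ℝ) - i) / (((n+1:ℕ):ℝ) - i)) :=
      mul_le_mul ih hcol (by positivity) hR
    have hid : ((A + Cc + n + 1 : ℕ) : ℝ) * ((A + Cc + n).choose n : ℝ) =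
        ((A + Cc + n + 1).choose (n+1) : ℝ) * ((n:ℝ) + 1) := by
      exact_mod_cast congrArg (fun t : ℕ => (t : ℝ)) (Nat.add_one_mul_choose_eq (A + Cc + n) n)
    have harg : ν 0 - ν (n+1) + (n+1) = A + Cc + n + 1 := by
      have h1 : ν n ≤ ν 0 := hν (Nat.zero_le n)
      have h2 : ν (n+1) ≤ ν n := hν (Nat.le_succ n)
      omega
    rw [harg]
    refine le_trans ?_ step1
    have hstep2 : ((A + Cc + n).choose n : ℝ) * (((A:ℝ) + Cc + n + 1) / ((n:ℝ)+1)) ≤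
        ((A+n).choose n : ℝ) * (((Cc + n).choose n : ℝ) * (((A:ℝ) + Cc + n + 1) / ((n:ℝ)+1))) := by
      rw [← mul_assoc]
      exact mul_le_mul_of_nonneg_right (wd_choose_mul_le A Cc n) (by positivity)
    refine le_trans (le_of_eq ?_) hstep2
    have hn : ((n:ℝ) + 1) ≠ 0 := by positivity
    field_simp
    push_cast at hid ⊢
    linarith [hid]

/-- The Weyl dimension of the irreducible representation of `U(d)` with highest weight
`λ = (λ₁ ≥ ⋯ ≥ λ_d)`:  `D_λ = ∏_{i<j} (λ_i − λ_j + j − i)/(j − i)`. -/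
noncomputable def weylDim (d : ℕ) (lam : Fin d → ℕ) : ℝ :=
  ∏ p ∈ Finset.univ.filter (fun p : Fin d × Fin d => p.1 < p.2),
    (((lam p.1 : ℝ) - (lam p.2 : ℝ) + ((p.2 : ℕ) : ℝ) - ((p.1 : ℕ) : ℝ)) /
      (((p.2 : ℕ) : ℝ) - ((p.1 : ℕ) : ℝ)))

open Finset in
private lemma wd_eq (d : ℕ) (lam : Fin d → ℕ) (ν : ℕ → ℕ)
    (hν : ∀ i : Fin d, ν i = lam i) :
    weylDim d lam = ∏ j ∈ range d, ∏ i ∈ range j,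
      (((ν i : ℝ) - ν j + (j:ℝ) - i) / ((j:ℝ) - i)) := by
  unfold weylDim
  rw [prod_filter, ← Finset.univ_product_univ, prod_product, Finset.prod_comm]
  rw [← Fin.prod_univ_eq_prod_range (fun j => ∏ i ∈ range j,
      (((ν i : ℝ) - ν j + (j:ℝ) - i) / ((j:ℝ) - i))) d]
  apply Finset.prod_congr rfl
  intro j _
  have hsub : (Finset.range d).filter (fun i => i < (j:ℕ)) = Finset.range (j:ℕ) := by
    ext i; simp only [mem_filter, mem_range]
    exact ⟨fun h => h.2, fun h => ⟨lt_trans h j.isLt, h⟩⟩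
  calc ∏ i : Fin d, (if i < j then
          (((lam i : ℝ) - (lam j : ℝ) + ((j : ℕ) : ℝ) - ((i : ℕ) : ℝ)) /
            (((j : ℕ) : ℝ) - ((i : ℕ) : ℝ))) else 1)
      = ∏ i ∈ range d, (if i < (j:ℕ) then
          (((ν i : ℝ) - ν (j:ℕ) + ((j:ℕ):ℝ) - (i:ℝ)) / (((j:ℕ):ℝ) - (i:ℝ))) else 1) := by
        rw [← Fin.prod_univ_eq_prod_range (fun i => (if i < (j:ℕ) then
          (((ν i : ℝ) - ν (j:ℕ) + ((j:ℕ):ℝ) - (i:ℝ)) / (((j:ℕ):ℝ) - (i:ℝ))) else 1)) d]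
        apply Finset.prod_congr rfl
        intro i _
        simp only [hν, Fin.lt_def]
    _ = ∏ i ∈ range (j:ℕ), (((ν i : ℝ) - ν (j:ℕ) + ((j:ℕ):ℝ) - (i:ℝ)) / (((j:ℕ):ℝ) - (i:ℝ))) := by
        rw [← prod_filter, hsub]

/-- Among all partitions `λ₁ ≥ ⋯ ≥ λ_d = 0` with `λ₁ = l`, the Weyl
dimension is minimized by the symmetric partition `(l, 0, …, 0)`, whose dimension is the
binomial coefficient `C(d−1+l, d−1)`. -/
theorem symmetric_rep_min_dim (d l : ℕ) (hd : 2 ≤ d) (hl : 0 < l)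
    (lam : Fin d → ℕ) (hanti : Antitone lam)
    (hfirst : lam ⟨0, by omega⟩ = l) (hlast : lam ⟨d - 1, by omega⟩ = 0) :
    ((d - 1 + l).choose (d - 1) : ℝ) ≤ weylDim d lam := by
  set ν : ℕ → ℕ := fun k => if h : k < d then lam ⟨k, h⟩ else 0 with hνdef
  have hν : ∀ i : Fin d, ν i = lam i := by
    intro i
    simp only [hνdef, i.isLt, dif_pos]
  have hνanti : Antitone ν := by
    intro x y hxy
    by_cases hy : y < d
    · have hx : x < d := lt_of_le_of_lt hxy hy
      simp only [hνdef, hx, hy, dif_pos]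
      exact hanti (show (⟨x, hx⟩ : Fin d) ≤ ⟨y, hy⟩ from hxy)
    · simp only [hνdef, hy, dif_neg, not_false_iff]
      exact Nat.zero_le _
  obtain ⟨e, rfl⟩ : ∃ e, d = e + 1 := ⟨d - 1, by omega⟩
  have hν0 : ν 0 = l := (hν ⟨0, by omega⟩).trans hfirst
  have hνe : ν e = 0 := (hν ⟨e + 1 - 1, by omega⟩).trans hlast
  have h := wd_key ν hνanti e
  rw [hν0, hνe, Nat.sub_zero] at h
  rw [wd_eq (e+1) lam ν hν]
  have harg : e + 1 - 1 + l = l + e := by omega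
  rw [harg]
  exact h
end

section
/- Let h be a positive even integer, let w > 0 be real, and let x be an integer with |x| ≤ h. Then (1/c_w) · Σ_{y∈ℤ} exp(−((y+x)² + y²)/(4w²)) ≥ exp(−h²/(8w²)), where c_w = Σ_{y∈ℤ} exp(−y²/(2w²)). -/
open Real

lemma summable_shift (b : ℝ) (hb : 0 < b) (t : ℝ) :
    Summable fun y : ℤ => Real.exp (-((y : ℝ) + t) ^ 2 / b) := by
  have hp : (0 : ℝ) < 1 / (π * b) := by positivity
  refine (HurwitzKernelBounds.summable_f_int 0 t hp).congr fun n => ?_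
  simp only [HurwitzKernelBounds.f_int, pow_zero, one_mul]
  congr 1
  field_simp

lemma tsum_shift (b : ℝ) (t : ℝ) (k : ℤ) :
    (∑' y : ℤ, Real.exp (-((y : ℝ) + (t + k)) ^ 2 / b)) =
      ∑' y : ℤ, Real.exp (-((y : ℝ) + t) ^ 2 / b) := by
  rw [← (Equiv.addRight k).tsum_eq (fun y : ℤ => Real.exp (-((y : ℝ) + t) ^ 2 / b))]
  refine tsum_congr fun y => ?_
  simp only [Equiv.coe_addRight]
  push_cast
  ring_nf



lemma exp_avg (u v : ℝ) : 2 * Real.exp ((u + v) / 2) ≤ Real.exp u + Real.exp v := by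
  have h := two_mul_le_add_sq (Real.exp (u / 2)) (Real.exp (v / 2))
  have e1 : Real.exp (u / 2) ^ 2 = Real.exp u := by
    rw [sq, ← Real.exp_add]; congr 1; ring
  have e2 : Real.exp (v / 2) ^ 2 = Real.exp v := by
    rw [sq, ← Real.exp_add]; congr 1; ring
  have e3 : Real.exp (u / 2) * Real.exp (v / 2) = Real.exp ((u + v) / 2) := by
    rw [← Real.exp_add]; congr 1; ring
  rw [e1, e2] at h
  calc 2 * Real.exp ((u + v) / 2) = 2 * (Real.exp (u / 2) * Real.exp (v / 2)) := by rw [e3]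
    _ ≤ Real.exp u + Real.exp v := by linarith [h]

lemma half_lower (b : ℝ) (hb : 0 < b) :
    Real.exp (-(1 / (4 * b))) * ∑' y : ℤ, Real.exp (-((y : ℝ) + 0) ^ 2 / b) ≤
      ∑' y : ℤ, Real.exp (-((y : ℝ) + 1 / 2) ^ 2 / b) := by
  have hps : Summable fun y : ℤ => Real.exp (-((y : ℝ) + 1 / 2) ^ 2 / b) :=
    summable_shift b hb (1 / 2)
  have hqs : Summable fun y : ℤ => Real.exp (-((y : ℝ) + -(1 / 2)) ^ 2 / b) :=
    summable_shift b hb (-(1 / 2))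
  have hqp : (∑' y : ℤ, Real.exp (-((y : ℝ) + -(1 / 2)) ^ 2 / b)) =
      ∑' y : ℤ, Real.exp (-((y : ℝ) + 1 / 2) ^ 2 / b) := by
    rw [← (Equiv.neg ℤ).tsum_eq (fun y : ℤ => Real.exp (-((y : ℝ) + 1 / 2) ^ 2 / b))]
    refine tsum_congr fun y => ?_
    simp only [Equiv.neg_apply, Int.cast_neg]
    congr 1
    ring
  have key : ∀ y : ℤ, Real.exp (-(1 / (4 * b))) * Real.exp (-((y : ℝ) + 0) ^ 2 / b) ≤
      (Real.exp (-((y : ℝ) + 1 / 2) ^ 2 / b) + Real.exp (-((y : ℝ) + -(1 / 2)) ^ 2 / b)) / 2 := by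
    intro y
    have h := exp_avg (-((y : ℝ) + 1 / 2) ^ 2 / b) (-((y : ℝ) + -(1 / 2)) ^ 2 / b)
    have e : Real.exp (-(1 / (4 * b))) * Real.exp (-((y : ℝ) + 0) ^ 2 / b) =
        Real.exp ((-((y : ℝ) + 1 / 2) ^ 2 / b + -((y : ℝ) + -(1 / 2)) ^ 2 / b) / 2) := by
      rw [← Real.exp_add]
      congr 1
      field_simp
      ring
    rw [e]
    linarith
  calc Real.exp (-(1 / (4 * b))) * ∑' y : ℤ, Real.exp (-((y : ℝ) + 0) ^ 2 / b)
      = ∑' y : ℤ, Real.exp (-(1 / (4 * b))) * Real.exp (-((y : ℝ) + 0) ^ 2 / b) :=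
        tsum_mul_left.symm
    _ ≤ ∑' y : ℤ, (Real.exp (-((y : ℝ) + 1 / 2) ^ 2 / b)
          + Real.exp (-((y : ℝ) + -(1 / 2)) ^ 2 / b)) / 2 :=
        Summable.tsum_le_tsum key ((summable_shift b hb 0).mul_left _) ((hps.add hqs).div_const 2)
    _ = ((∑' y : ℤ, Real.exp (-((y : ℝ) + 1 / 2) ^ 2 / b))
          + ∑' y : ℤ, Real.exp (-((y : ℝ) + -(1 / 2)) ^ 2 / b)) / 2 := by
        rw [tsum_div_const, Summable.tsum_add hps hqs]
    _ = ∑' y : ℤ, Real.exp (-((y : ℝ) + 1 / 2) ^ 2 / b) := by rw [hqp]; ring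

/-- For `h` a positive even integer, `w > 0`, and an integer `x` with
`|x| ≤ h`:  `(1/c_w) · Σ_{y∈ℤ} exp(−((y+x)² + y²)/(4w²)) ≥ exp(−h²/(8w²))`, where
`c_w = Σ_{y∈ℤ} exp(−y²/(2w²))`. -/
theorem gaussian_overlap_lower_bound (h : ℕ) (hh : 0 < h) (hhe : Even h)
    (w : ℝ) (hw : 0 < w) (x : ℤ) (hx : |(x : ℝ)| ≤ (h : ℝ)) :
    Real.exp (-(h : ℝ) ^ 2 / (8 * w ^ 2)) ≤
      (∑' y : ℤ, Real.exp (-(((y : ℝ) + (x : ℝ)) ^ 2 + (y : ℝ) ^ 2) / (4 * w ^ 2))) /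
        (∑' y : ℤ, Real.exp (-(y : ℝ) ^ 2 / (2 * w ^ 2))) := by
  have hb : (0 : ℝ) < 2 * w ^ 2 := by positivity
  have h8 : (0 : ℝ) < 8 * w ^ 2 := by positivity
  -- the denominator
  have hDeq : (∑' y : ℤ, Real.exp (-(y : ℝ) ^ 2 / (2 * w ^ 2))) =
      ∑' y : ℤ, Real.exp (-((y : ℝ) + 0) ^ 2 / (2 * w ^ 2)) :=
    tsum_congr fun y => by norm_num
  have hDs : Summable fun y : ℤ => Real.exp (-(y : ℝ) ^ 2 / (2 * w ^ 2)) := by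
    refine (summable_shift (2 * w ^ 2) hb 0).congr fun y => ?_
    norm_num
  have hD0 : 0 < ∑' y : ℤ, Real.exp (-(y : ℝ) ^ 2 / (2 * w ^ 2)) :=
    Summable.tsum_pos hDs (fun i => (Real.exp_pos _).le) 0 (Real.exp_pos _)
  rw [le_div_iff₀ hD0]
  -- rewrite the numerator
  have hNeq : (∑' y : ℤ, Real.exp (-(((y : ℝ) + (x : ℝ)) ^ 2 + (y : ℝ) ^ 2) / (4 * w ^ 2))) =
      Real.exp (-(x : ℝ) ^ 2 / (8 * w ^ 2)) *
        ∑' y : ℤ, Real.exp (-((y : ℝ) + (x : ℝ) / 2) ^ 2 / (2 * w ^ 2)) := by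
    rw [← tsum_mul_left]
    refine tsum_congr fun y => ?_
    rw [← Real.exp_add]
    congr 1
    field_simp
    ring
  rw [hNeq]
  have hx2 : (x : ℝ) ^ 2 ≤ (h : ℝ) ^ 2 := by
    rw [← sq_abs]
    exact pow_le_pow_left₀ (abs_nonneg _) hx 2
  rcases Int.even_or_odd x with ⟨k, hk⟩ | ⟨k, hk⟩
  · -- x even
    have hS : (∑' y : ℤ, Real.exp (-((y : ℝ) + (x : ℝ) / 2) ^ 2 / (2 * w ^ 2))) =
        ∑' y : ℤ, Real.exp (-(y : ℝ) ^ 2 / (2 * w ^ 2)) := by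
      rw [hDeq, ← tsum_shift (2 * w ^ 2) 0 k]
      refine tsum_congr fun y => ?_
      congr 2
      rw [hk]
      push_cast
      ring
    rw [hS]
    refine mul_le_mul_of_nonneg_right ?_ hD0.le
    rw [Real.exp_le_exp, div_le_div_iff₀ h8 h8]
    nlinarith
  · -- x odd
    have hS : (∑' y : ℤ, Real.exp (-((y : ℝ) + (x : ℝ) / 2) ^ 2 / (2 * w ^ 2))) =
        ∑' y : ℤ, Real.exp (-((y : ℝ) + 1 / 2) ^ 2 / (2 * w ^ 2)) := by
      rw [← tsum_shift (2 * w ^ 2) (1 / 2) k]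
      refine tsum_congr fun y => ?_
      congr 2
      rw [hk]
      push_cast
      ring
    -- integer inequality x^2 + 1 ≤ h^2
    have hxh : x ^ 2 + 1 ≤ (h : ℤ) ^ 2 := by
      have h1 : x ^ 2 ≤ (h : ℤ) ^ 2 := by exact_mod_cast hx2
      have h2 : x ^ 2 ≠ (h : ℤ) ^ 2 := by
        intro he
        have : Odd (x ^ 2) := (Int.odd_pow' two_ne_zero).mpr ⟨k, hk⟩
        rw [he] at this
        have hev : Even ((h : ℤ) ^ 2) := by
          rw [sq]; exact (((Int.even_coe_nat h).mpr hhe).mul_right _)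
        exact (Int.not_odd_iff_even.mpr hev) this
      omega
    have hxhR : (x : ℝ) ^ 2 + 1 ≤ (h : ℝ) ^ 2 := by exact_mod_cast hxh
    have hkey := half_lower (2 * w ^ 2) hb
    rw [← hDeq] at hkey
    rw [hS]
    have e4 : -(1 / (4 * (2 * w ^ 2))) = -1 / (8 * w ^ 2) := by ring
    calc Real.exp (-(h : ℝ) ^ 2 / (8 * w ^ 2)) * ∑' y : ℤ, Real.exp (-(y : ℝ) ^ 2 / (2 * w ^ 2))
        ≤ (Real.exp (-(x : ℝ) ^ 2 / (8 * w ^ 2)) * Real.exp (-(1 / (4 * (2 * w ^ 2))))) *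
            ∑' y : ℤ, Real.exp (-(y : ℝ) ^ 2 / (2 * w ^ 2)) := by
          refine mul_le_mul_of_nonneg_right ?_ hD0.le
          rw [← Real.exp_add, Real.exp_le_exp, e4]
          rw [← add_div, div_le_div_iff₀ h8 h8]
          nlinarith
      _ = Real.exp (-(x : ℝ) ^ 2 / (8 * w ^ 2)) * (Real.exp (-(1 / (4 * (2 * w ^ 2)))) *
            ∑' y : ℤ, Real.exp (-(y : ℝ) ^ 2 / (2 * w ^ 2))) := by ring
      _ ≤ Real.exp (-(x : ℝ) ^ 2 / (8 * w ^ 2)) *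
            ∑' y : ℤ, Real.exp (-((y : ℝ) + 1 / 2) ^ 2 / (2 * w ^ 2)) :=
          mul_le_mul_of_nonneg_left hkey (Real.exp_pos _).le
end
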